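/- Let R be a commutative ring that is also a Q-algebra, let d ≥ 1, and let M be a d × d matrix over R. Then in the formal power series ring R⟦z⟧ one has det(1 − z·M) · exp( Σ_{n≥1} tr(M^n) z^n / n ) = 1, where 1 − z·M is regarded as a d × d matrix over R⟦z⟧, det is its determinant, tr(M^n) is the trace of the n-th matrix power of M, and exp denotes the formal exponential power series Σ_{m≥0} X^m/m! applied to a power series with zero constant term. -/

import Mathlib

open PowerSeries

lemma nnsd_of_ratAlgebra {S : Type*} [AddCommMonoid S] [Module ℚ S] :
    NoZeroSMulDivisors ℕ S := by
  constructor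
  intro n x h
  rcases Nat.eq_zero_or_pos n with hn | hn
  · exact Or.inl hn
  · right
    have h1 : ((n : ℚ)) • x = 0 := by rw [Nat.cast_smul_eq_nsmul]; exact h
    have h2 : (n : ℚ) ≠ 0 := Nat.cast_ne_zero.mpr hn.ne'
    calc x = (n : ℚ)⁻¹ • ((n : ℚ) • x) := (inv_smul_smul₀ h2 x).symm
    _ = 0 := by rw [h1, smul_zero]

lemma Derivation.finset_prod {R S : Type*} [CommRing R] [CommRing S] [Algebra R S]
    (δ : Derivation R S S) {ι : Type*} [DecidableEq ι] (s : Finset ι) (f : ι → S) :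
    δ (∏ i ∈ s, f i) = ∑ i ∈ s, (∏ j ∈ s.erase i, f j) * δ (f i) := by
  induction s using Finset.induction with
  | empty => simp
  | @insert a s h ih =>
    rw [Finset.prod_insert h, Derivation.leibniz, smul_eq_mul, smul_eq_mul, ih,
      Finset.sum_insert h, Finset.erase_insert h, Finset.mul_sum, add_comm]
    congr 1
    refine Finset.sum_congr rfl fun i hi => ?_
    rw [Finset.erase_insert_of_ne (by rintro rfl; exact h hi),
      Finset.prod_insert (fun hc => h (Finset.mem_of_mem_erase hc)), mul_assoc]

/-- Jacobi's formula for a derivation. -/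
lemma jacobi_formula {R S : Type*} [CommRing R] [CommRing S] [Algebra R S]
    (δ : Derivation R S S) {n : ℕ} (A : Matrix (Fin n) (Fin n) S) :
    δ A.det = Matrix.trace (A.adjugate * A.map (fun x => δ x)) := by
  have htr : Matrix.trace (A.adjugate * A.map (fun x => δ x)) =
      ∑ j, (A.updateCol j fun i => δ (A i j)).det := by
    refine Finset.sum_congr rfl fun j _ => ?_
    have := congrFun (Matrix.cramer_eq_adjugate_mulVec A (fun i => δ (A i j))) j
    rw [Matrix.cramer_apply] at this
    rw [this]
    simp [Matrix.mul_apply, Matrix.mulVec, dotProduct, Matrix.diag]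
  rw [htr, Matrix.det_apply']
  rw [map_sum]
  have key : ∀ σ : Equiv.Perm (Fin n),
      δ (((Equiv.Perm.sign σ : ℤ) : S) * ∏ i, A (σ i) i) =
      ∑ j, ((Equiv.Perm.sign σ : ℤ) : S) *
        ((∏ i ∈ Finset.univ.erase j, A (σ i) i) * δ (A (σ j) j)) := by
    intro σ
    rw [Derivation.leibniz, Derivation.map_intCast, smul_zero, add_zero, smul_eq_mul,
      Derivation.finset_prod, Finset.mul_sum]
  rw [Finset.sum_congr rfl fun σ _ => key σ, Finset.sum_comm]
  refine Finset.sum_congr rfl fun j _ => ?_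
  rw [Matrix.det_apply']
  refine Finset.sum_congr rfl fun σ _ => ?_
  have h1 : ∀ i ∈ Finset.univ.erase j,
      (A.updateCol j fun i => δ (A i j)) (σ i) i = A (σ i) i := fun i hi => by
    rw [Matrix.updateCol_apply, if_neg (Finset.mem_erase.mp hi).1]
  rw [← Finset.mul_prod_erase _ _ (Finset.mem_univ j), Finset.prod_congr rfl h1,
    Matrix.updateCol_apply, if_pos rfl]
  ring

/-- The formal exponential `exp F = ∑_{m≥0} F^m / m!` of a formal power series `F` with zero
constant coefficient over a `ℚ`-algebra, computed coefficientwise (for `F` with zero constant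
coefficient, `coeff d (F^m) = 0` whenever `m > d`, so the sum below is exactly the `d`-th
coefficient of `∑_{m≥0} F^m / m!`). -/
noncomputable def expComp {R : Type*} [CommRing R] [Algebra ℚ R] (F : PowerSeries R) :
    PowerSeries R :=
  PowerSeries.mk fun d => ∑ m ∈ Finset.range (d + 1),
    algebraMap ℚ R (1 / m.factorial) * PowerSeries.coeff d (F ^ m)

/-- Determinant–trace identity: for a `d × d` matrix `M` over a commutative `ℚ`-algebra `R`,
`det(1 − z·M) · exp(∑_{n≥1} tr(M^n) z^n / n) = 1` in `R⟦z⟧`. -/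
theorem stmt3 {R : Type*} [CommRing R] [Algebra ℚ R] (d : ℕ) (hd : 1 ≤ d)
    (M : Matrix (Fin d) (Fin d) R) :
    ((1 : Matrix (Fin d) (Fin d) (PowerSeries R)) -
        Matrix.of fun i j => PowerSeries.X * PowerSeries.C (M i j)).det *
      expComp (PowerSeries.mk fun n => match n with
        | 0 => 0
        | m + 1 => ((m + 1 : ℚ))⁻¹ • Matrix.trace (M ^ (m + 1))) = 1 := by
  classical
  set A : Matrix (Fin d) (Fin d) (PowerSeries R) :=
    (1 : Matrix (Fin d) (Fin d) (PowerSeries R)) -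
      Matrix.of fun i j => PowerSeries.X * PowerSeries.C (M i j) with hA
  set T : PowerSeries R := PowerSeries.mk fun n => match n with
    | 0 => 0
    | m + 1 => ((m + 1 : ℚ))⁻¹ • Matrix.trace (M ^ (m + 1)) with hT
  set N : Matrix (Fin d) (Fin d) (PowerSeries R) :=
    Matrix.of (fun i j => PowerSeries.C (M i j)) with hN
  set G : Matrix (Fin d) (Fin d) (PowerSeries R) :=
    Matrix.of (fun i j => PowerSeries.mk fun n => (M ^ n) i j) with hG
  -- basic coefficient facts about T
  have hTc : constantCoeff T = 0 := by
    rw [hT, ← coeff_zero_eq_constantCoeff, coeff_mk]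
  have hT' : ∀ n : ℕ, coeff n (d⁄dX R T) = Matrix.trace (M ^ (n + 1)) := by
    intro n
    rw [PowerSeries.coeff_derivative, hT, coeff_mk]
    show (((n : ℚ) + 1)⁻¹ • Matrix.trace (M ^ (n + 1))) * ((n : R) + 1) = _
    have hq : ((n : ℚ) + 1) ≠ 0 := by positivity
    have halg : (algebraMap ℚ R) ((n : ℚ) + 1) = (n : R) + 1 := by
      rw [map_add, map_one, map_natCast]
    calc (((n : ℚ) + 1)⁻¹ • Matrix.trace (M ^ (n + 1))) * ((n : R) + 1)
        = ((n : ℚ) + 1)⁻¹ • (((n : ℚ) + 1) • Matrix.trace (M ^ (n + 1))) := by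
          rw [smul_mul_assoc]
          congr 1
          rw [Algebra.smul_def, halg, mul_comm]
      _ = Matrix.trace (M ^ (n + 1)) := inv_smul_smul₀ hq _
  -- A = 1 - X • N
  have hAX : A = 1 - (PowerSeries.X : PowerSeries R) • N := by
    rw [hA, hN]
    ext i j
    simp [Matrix.smul_apply, smul_eq_mul]
  -- A * G = 1
  have hAG : A * G = 1 := by
    rw [hAX, Matrix.sub_mul, Matrix.one_mul, Matrix.smul_mul]
    ext i j n
    rw [Matrix.sub_apply, Matrix.smul_apply, smul_eq_mul, map_sub]
    cases n with
    | zero =>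
      rw [coeff_zero_X_mul, hG]
      simp [Matrix.one_apply, apply_ite (coeff 0)]
    | succ n =>
      rw [coeff_succ_X_mul, hG, hN]
      simp only [Matrix.of_apply, coeff_mk, Matrix.mul_apply, map_sum, coeff_C_mul]
      have heq : ∑ k, M i k * (M ^ n) k j = (M ^ (n + 1)) i j := by
        rw [pow_succ']; simp [Matrix.mul_apply]
      rw [heq, sub_self]
      simp [Matrix.one_apply, apply_ite (coeff (n + 1))]
  -- adjugate A = det A • G
  have hadj : A.adjugate = A.det • G := by
    calc A.adjugate = A.adjugate * (A * G) := by rw [hAG, Matrix.mul_one]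
      _ = (A.adjugate * A) * G := (Matrix.mul_assoc _ _ _).symm
      _ = (A.det • 1) * G := by rw [Matrix.adjugate_mul]
      _ = A.det • G := by rw [Matrix.smul_mul, Matrix.one_mul]
  -- entrywise derivative of A
  have hmapδ : A.map (fun x => d⁄dX R x) = -N := by
    rw [hA, hN]
    ext i j
    simp only [Matrix.map_apply, Matrix.sub_apply, Matrix.of_apply, Matrix.neg_apply, map_sub]
    rw [Derivation.leibniz, PowerSeries.derivative_C, smul_zero, PowerSeries.derivative_X,
      smul_eq_mul, mul_one, zero_add]
    have h1 : d⁄dX R ((1 : Matrix (Fin d) (Fin d) (PowerSeries R)) i j) = 0 := by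
      rw [Matrix.one_apply]
      split
      · exact Derivation.map_one_eq_zero _
      · exact map_zero _
    rw [h1]
    simp
  -- trace of G * N
  have htrGN : Matrix.trace (G * N) = d⁄dX R T := by
    apply PowerSeries.ext
    intro n
    rw [hT' n, pow_succ]
    simp only [Matrix.trace]
    rw [map_sum]
    refine Finset.sum_congr rfl fun j _ => ?_
    rw [Matrix.diag_apply, Matrix.diag_apply, Matrix.mul_apply, map_sum, Matrix.mul_apply]
    refine Finset.sum_congr rfl fun k _ => ?_
    rw [hG, hN]
    simp [coeff_mul_C]
  -- derivative of det A
  have hP' : d⁄dX R A.det = -(A.det * d⁄dX R T) := by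
    rw [jacobi_formula (d⁄dX R) A, hmapδ, hadj, Matrix.mul_neg, Matrix.trace_neg,
      Matrix.smul_mul, Matrix.trace_smul, smul_eq_mul, htrGN]
  -- coefficients of powers of T vanish below the exponent
  have hTpow : ∀ m n : ℕ, n < m → coeff n (T ^ m) = 0 := by
    intro m n hnm
    have hX : (PowerSeries.X : PowerSeries R) ∣ T := X_dvd_iff.mpr hTc
    have hXm : (PowerSeries.X : PowerSeries R) ^ m ∣ T ^ m := pow_dvd_pow_of_dvd hX m
    exact X_pow_dvd_iff.mp hXm n hnm
  -- partial sums of the exponential series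
  set Sk : ℕ → PowerSeries R :=
    fun k => ∑ m ∈ Finset.range (k + 1), ((m.factorial : ℚ))⁻¹ • T ^ m with hSk
  have hES : ∀ n k : ℕ, n ≤ k → coeff n (expComp T) = coeff n (Sk k) := by
    intro n k hnk
    have hterm : ∀ m : ℕ, coeff n (((m.factorial : ℚ))⁻¹ • T ^ m) =
        algebraMap ℚ R (1 / m.factorial) * coeff n (T ^ m) := by
      intro m
      rw [PowerSeries.coeff_smul, Algebra.smul_def, one_div]
    rw [expComp, coeff_mk]
    simp only [hSk]
    rw [map_sum, Finset.sum_congr rfl fun m _ => hterm m]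
    refine Finset.sum_subset (Finset.range_subset_range.mpr (by omega)) ?_
    intro m hm hnm
    rw [hTpow m n (by simp only [Finset.mem_range, not_lt] at hnm ⊢; omega), mul_zero]
  -- smul rule for the derivative
  have hsm : ∀ (q : ℚ) (f : PowerSeries R), d⁄dX R (q • f) = q • d⁄dX R f := by
    intro q f
    rw [Algebra.smul_def, Algebra.smul_def, PowerSeries.algebraMap_apply, Derivation.leibniz,
      PowerSeries.derivative_C, smul_zero, add_zero, smul_eq_mul]
  have harith : ∀ m : ℕ, (((m + 1).factorial : ℚ))⁻¹ * ((m : ℚ) + 1) = ((m.factorial : ℚ))⁻¹ := by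
    intro m
    have h2 : (m.factorial : ℚ) ≠ 0 := Nat.cast_ne_zero.mpr m.factorial_ne_zero
    have h1 : ((m : ℚ) + 1) ≠ 0 := by positivity
    rw [Nat.factorial_succ]
    push_cast
    field_simp
  have hterm2 : ∀ m : ℕ,
      d⁄dX R ((((m + 1).factorial : ℚ))⁻¹ • T ^ (m + 1)) =
        ((m.factorial : ℚ))⁻¹ • (d⁄dX R T * T ^ m) := by
    intro m
    rw [hsm, Derivation.leibniz_pow, Nat.add_sub_cancel, smul_eq_mul,
      ← Nat.cast_smul_eq_nsmul ℚ, smul_smul, Nat.cast_add_one, harith m, mul_comm]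
  have hSd : ∀ k : ℕ, d⁄dX R (Sk (k + 1)) = d⁄dX R T * Sk k := by
    intro k
    simp only [hSk]
    rw [map_sum, Finset.sum_range_succ', Finset.sum_congr rfl fun m _ => hterm2 m]
    have h0 : d⁄dX R (((Nat.factorial 0 : ℚ))⁻¹ • T ^ 0) = 0 := by
      rw [hsm, pow_zero]
      simp
    rw [h0, add_zero, Finset.mul_sum]
    exact Finset.sum_congr rfl fun m _ => (mul_smul_comm _ _ _).symm
  -- derivative of the exponential
  have hE' : d⁄dX R (expComp T) = d⁄dX R T * expComp T := by
    apply PowerSeries.ext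
    intro n
    rw [PowerSeries.coeff_derivative, hES (n + 1) (n + 1) le_rfl,
      ← PowerSeries.coeff_derivative, hSd n, coeff_mul, coeff_mul]
    refine Finset.sum_congr rfl fun p hp => ?_
    have hp2 : p.2 ≤ n := by
      have := Finset.HasAntidiagonal.mem_antidiagonal.mp hp; omega
    rw [hES p.2 n hp2]
  -- constant coefficients
  have hE0 : constantCoeff (expComp T) = 1 := by
    rw [← coeff_zero_eq_constantCoeff, expComp, coeff_mk]
    simp
  have hmapA : A.map constantCoeff = 1 := by
    rw [hA]
    ext i j
    simp [Matrix.one_apply, apply_ite constantCoeff, Matrix.map_apply]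
  have hA0 : constantCoeff A.det = 1 := by
    rw [RingHom.map_det, RingHom.mapMatrix_apply, hmapA, Matrix.det_one]
  -- conclude
  have hkey : d⁄dX R (A.det * expComp T) = 0 := by
    rw [Derivation.leibniz, hE', hP', smul_eq_mul, smul_eq_mul]
    ring
  haveI : NoZeroSMulDivisors ℕ (PowerSeries R) := nnsd_of_ratAlgebra
  haveI : IsAddTorsionFree R := ⟨fun n hn a b h => by
    have h2 : (n : ℚ) ≠ 0 := Nat.cast_ne_zero.mpr hn
    have h3 : (n : ℚ) • a = (n : ℚ) • b := by
      rw [Nat.cast_smul_eq_nsmul ℚ, Nat.cast_smul_eq_nsmul ℚ]; exact h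
    calc a = (n : ℚ)⁻¹ • ((n : ℚ) • a) := (inv_smul_smul₀ h2 a).symm
    _ = (n : ℚ)⁻¹ • ((n : ℚ) • b) := by rw [h3]
    _ = b := inv_smul_smul₀ h2 b⟩
  refine PowerSeries.derivative.ext ?_ ?_
  · rw [hkey, Derivation.map_one_eq_zero]
  · rw [map_mul, hA0, hE0, map_one, one_mul]
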